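/- Suppose R is noetherian in codimension 1, with witnessing depiction S, and set T := ⋂_{n ∈ U_{S/R}} S_n ⊆ Frac(R). If t is a prime ideal of T of height 1, then t ∈ Z_{T/R}. -/

import Mathlib

/-! Common framework: depictions of nonnoetherian integral domains (Beil).
`K` plays the role of the fraction field `Frac R`; all rings are `k`-subalgebras of `K`. -/

section Depictions

variable {k K : Type*} [Field k] [Field K] [Algebra k K]

/-- The localization `A_p` of a subalgebra `A ⊆ K` at a prime ideal `p`,
viewed as a subalgebra of `K`. -/
def locAt (A : Subalgebra k K) (p : Ideal A) (hp : p.IsPrime) : Subalgebra k K where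
  carrier := {x : K | ∃ a s : A, s ∉ p ∧ x * (s : K) = (a : K)}
  one_mem' := ⟨1, 1, (Ideal.ne_top_iff_one p).mp hp.ne_top, by simp⟩
  zero_mem' := ⟨0, 1, (Ideal.ne_top_iff_one p).mp hp.ne_top, by simp⟩
  mul_mem' := by
    rintro x y ⟨a, s, hs, hx⟩ ⟨b, t, ht, hy⟩
    refine ⟨a * b, s * t, fun h => ((hp.mem_or_mem h).elim hs ht), ?_⟩
    have : x * y * ((s : K) * (t : K)) = (x * s) * (y * t) := by ring
    push_cast
    rw [this, hx, hy]
  add_mem' := by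
    rintro x y ⟨a, s, hs, hx⟩ ⟨b, t, ht, hy⟩
    refine ⟨a * t + b * s, s * t, fun h => ((hp.mem_or_mem h).elim hs ht), ?_⟩
    have : (x + y) * ((s : K) * (t : K)) = (x * s) * t + (y * t) * s := by ring
    push_cast
    rw [this, hx, hy]
  algebraMap_mem' := fun c =>
    ⟨algebraMap k A c, 1, (Ideal.ne_top_iff_one p).mp hp.ne_top, by simp⟩

lemma mem_locAt {A : Subalgebra k K} {p : Ideal A} {hp : p.IsPrime} {x : K} :
    x ∈ locAt A p hp ↔ ∃ a s : A, s ∉ p ∧ x * (s : K) = (a : K) := Iff.rfl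

/-- `n ∈ U_{S/R}`: `n` is a maximal ideal of `S` with `R_{n ∩ R} = S_n`. -/
def memU (R S : Subalgebra k K) (h : R ≤ S) (n : Ideal S) : Prop :=
  ∃ hn : n.IsMaximal,
    locAt R (n.comap (Subalgebra.inclusion h)) (hn.isPrime.comap _) = locAt S n hn.isPrime

/-- `q ∈ Z_{S/R}`: `q` is a prime of `S` whose zero locus meets `U_{S/R}`,
i.e. some `n ∈ U_{S/R}` contains `q`. -/
def memZ (R S : Subalgebra k K) (h : R ≤ S) (q : Ideal S) : Prop :=
  q.IsPrime ∧ ∃ n : Ideal S, memU R S h n ∧ q ≤ n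

/-- `S` is a depiction of `R`. -/
structure IsDepiction (R S : Subalgebra k K) : Prop where
  le : R ≤ S
  fg : S.FG
  specSurj : ∀ p : Ideal R, p.IsPrime →
    ∃ q : Ideal S, q.IsPrime ∧ q.comap (Subalgebra.inclusion le) = p
  memU_iff : ∀ (n : Ideal S) (hn : n.IsMaximal),
    memU R S le n ↔
      IsNoetherianRing (locAt R (n.comap (Subalgebra.inclusion le)) (hn.isPrime.comap _))
  nonempty : ∃ n : Ideal S, memU R S le n

/-- The height of an ideal `q`, as the Krull dimension of the set of primes contained in `q`. -/
noncomputable def htOf {A : Type*} [CommRing A] (q : Ideal A) : WithBot ℕ∞ :=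
  Order.krullDim {p : PrimeSpectrum A // p.asIdeal ≤ q}

/-- The geometric height of a prime `p` of `R`: the minimum of the heights `ht_S q` over all
depictions `S` of `R` and primes `q` of `S` with `q ∩ R = p`. -/
noncomputable def ght (R : Subalgebra k K) (p : Ideal R) : WithBot ℕ∞ :=
  sInf {h | ∃ (S : Subalgebra k K) (hd : IsDepiction R S) (q : Ideal S),
    q.IsPrime ∧ q.comap (Subalgebra.inclusion hd.le) = p ∧ h = htOf q}

/-- The geometric dimension of a prime `p` of `R`: `gdim p = dim R - ght p`. -/
noncomputable def gdim (R : Subalgebra k K) (p : Ideal R) : WithBot ℕ∞ :=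
  Option.map₂ (· - ·) (ringKrullDim ↥R) (ght R p)

/-- `T := ⋂_{n ∈ U_{S/R}} S_n`, as a subalgebra of `K`. -/
noncomputable def depT (R S : Subalgebra k K) (h : R ≤ S) : Subalgebra k K :=
  sInf {L | ∃ (n : Ideal S) (hn : n.IsMaximal), memU R S h n ∧ L = locAt S n hn.isPrime}

lemma le_depT (R S : Subalgebra k K) (h : R ≤ S) : S ≤ depT R S h := by
  refine le_sInf ?_
  rintro L ⟨n, hn, -, rfl⟩
  intro x hx
  exact ⟨⟨x, hx⟩, 1, (Ideal.ne_top_iff_one n).mp hn.ne_top, by simp⟩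

/-- A depiction `S` of `R` witnesses `noetherian in codimension 1`:
every height 1 prime of `S` lies in `Z_{S/R}`. -/
def Witnessing (R S : Subalgebra k K) (h : R ≤ S) : Prop :=
  ∀ q : Ideal S, q.IsPrime → htOf q = 1 → memZ R S h q

/-- `R` is noetherian in codimension 1. -/
def NoethCodimOne (R : Subalgebra k K) : Prop :=
  ∃ (S : Subalgebra k K) (hd : IsDepiction R S), Witnessing R S hd.le

/-- A depiction `S` of `R` is saturated if `ght (q ∩ R) = ht_S q` for every prime `q` of `S`
minimal over `(q ∩ R)S`. -/
def IsSaturated (R S : Subalgebra k K) (h : R ≤ S) : Prop :=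
  ∀ q : Ideal S,
    q ∈ (Ideal.map (Subalgebra.inclusion h) (q.comap (Subalgebra.inclusion h))).minimalPrimes →
      ght R (q.comap (Subalgebra.inclusion h)) = htOf q

/-- The subalgebra `k + p ⊆ K`, for `p` an ideal of a subalgebra `S ⊆ K`. -/
def kPlus (S : Subalgebra k K) (p : Ideal S) : Subalgebra k K where
  carrier := {x : K | ∃ (c : k) (f : S), f ∈ p ∧ x = algebraMap k K c + (f : K)}
  one_mem' := ⟨1, 0, p.zero_mem, by simp⟩
  zero_mem' := ⟨0, 0, p.zero_mem, by simp⟩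
  mul_mem' := by
    rintro x y ⟨c, f, hf, rfl⟩ ⟨d, g, hg, rfl⟩
    refine ⟨c * d, algebraMap k S c * g + algebraMap k S d * f + f * g,
      add_mem (add_mem (p.mul_mem_left _ hg) (p.mul_mem_left _ hf)) (p.mul_mem_left _ hg),
      ?_⟩
    push_cast
    ring
  add_mem' := by
    rintro x y ⟨c, f, hf, rfl⟩ ⟨d, g, hg, rfl⟩
    exact ⟨c + d, f + g, add_mem hf hg, by push_cast; ring⟩
  algebraMap_mem' := fun c => ⟨c, 0, p.zero_mem, by simp⟩

lemma kPlus_le (S : Subalgebra k K) (p : Ideal S) : kPlus S p ≤ S := by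
  rintro x ⟨c, f, hf, rfl⟩
  exact add_mem (S.algebraMap_mem c) f.2

end Depictions

section Aux

variable {k K : Type*} [Field k] [Field K] [Algebra k K]

lemma locAt_congr {A : Subalgebra k K} {p q : Ideal A} (h : p = q) {hp : p.IsPrime}
    {hq : q.IsPrime} : locAt A p hp = locAt A q hq := by subst h; rfl

lemma locAt_anti {A : Subalgebra k K} {p q : Ideal A} (h : p ≤ q) {hp : p.IsPrime}
    {hq : q.IsPrime} : locAt A q hq ≤ locAt A p hp := by
  rintro x ⟨a, s, hs, hx⟩
  exact ⟨a, s, fun hc => hs (h hc), hx⟩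

lemma exists_sub_algebraMap_mem (k A : Type*) [Field k] [IsAlgClosed k] [CommRing A] [Algebra k A]
    [Algebra.FiniteType k A] (n : Ideal A) (hn : n.IsMaximal) (e : A) :
    ∃ c : k, e - algebraMap k A c ∈ n := by
  haveI := hn
  haveI FT : Algebra.FiniteType k (A ⧸ n) :=
    Algebra.FiniteType.of_surjective (Ideal.Quotient.mkₐ k n)
      (Ideal.Quotient.mkₐ_surjective k n)
  letI F : Field (A ⧸ n) := Ideal.Quotient.field n
  haveI : Module.Finite k (A ⧸ n) := finite_of_finite_type_of_isJacobsonRing k (A ⧸ n)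
  haveI : Algebra.IsIntegral k (A ⧸ n) := Algebra.IsIntegral.of_finite k _
  obtain ⟨c, hc⟩ := (IsAlgClosed.algebraMap_bijective_of_isIntegral (k := k)).2 (Ideal.Quotient.mk n e)
  refine ⟨c, ?_⟩
  rw [← Ideal.Quotient.eq_zero_iff_mem, map_sub, ← hc]
  simp [Ideal.Quotient.algebraMap_eq]

lemma depT_le_locAt {R S : Subalgebra k K} (h : R ≤ S) {n : Ideal S} (hU : memU R S h n)
    (hp : n.IsPrime) : depT R S h ≤ locAt S n hp := by
  obtain ⟨hn, -⟩ := id hU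
  intro x hx
  exact Algebra.mem_sInf.mp hx (locAt S n hn.isPrime) ⟨n, hn, hU, rfl⟩

/-- The extension of a prime `n` of `S` to an overring `T'` contained in `S_n`. -/
def extPrime (S T' : Subalgebra k K) (n : Ideal S) (hn : n.IsPrime)
    (hloc : T' ≤ locAt S n hn) : Ideal ↥T' where
  carrier := {z : ↥T' | ∃ e s : ↥S, s ∉ n ∧ (z : K) * (s : K) = (e : K) ∧ e ∈ n}
  zero_mem' := ⟨0, 1, (Ideal.ne_top_iff_one n).mp hn.ne_top, by simp, n.zero_mem⟩
  add_mem' := by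
    rintro z z' ⟨e, s, hs, heq, he⟩ ⟨e', s', hs', heq', he'⟩
    refine ⟨e * s' + e' * s, s * s', fun h => (hn.mem_or_mem h).elim hs hs', ?_,
      Ideal.add_mem n (n.mul_mem_right _ he) (n.mul_mem_right _ he')⟩
    have : ((z : K) + (z' : K)) * ((s : K) * (s' : K)) =
        ((z : K) * s) * s' + ((z' : K) * s') * s := by ring
    push_cast
    rw [this, heq, heq']
  smul_mem' := by
    rintro c z ⟨e, s, hs, heq, he⟩
    obtain ⟨b, d, hd, hbd⟩ := hloc c.2
    refine ⟨b * e, d * s, fun h => (hn.mem_or_mem h).elim hd hs, ?_, n.mul_mem_left _ he⟩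
    have : ((c : K) * (z : K)) * ((d : K) * (s : K)) =
        ((c : K) * d) * ((z : K) * s) := by ring
    rw [smul_eq_mul]
    push_cast
    rw [this, hbd, heq]

lemma extPrime_isPrime {S T' : Subalgebra k K} {n : Ideal S} {hn : n.IsPrime}
    {hloc : T' ≤ locAt S n hn} : (extPrime S T' n hn hloc).IsPrime := by
  constructor
  · rw [Ideal.ne_top_iff_one]
    rintro ⟨e, s, hs, heq, he⟩
    rw [Subalgebra.coe_one, one_mul] at heq
    exact hs (by rwa [Subtype.coe_injective heq])
  · intro z z' hzz
    obtain ⟨e, s, hs, heq, he⟩ := hzz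
    obtain ⟨b, c, hc, hbc⟩ := hloc z.2
    obtain ⟨b', c', hc', hbc'⟩ := hloc z'.2
    have key : ((b * b' * s : ↥S) : K) = ((e * (c * c') : ↥S) : K) := by
      push_cast
      rw [← hbc, ← hbc', ← heq]
      push_cast
      ring
    have key2 : b * b' * s ∈ n := by
      rw [Subtype.coe_injective key]
      exact n.mul_mem_right _ he
    have hbb' : b * b' ∈ n := ((hn.mem_or_mem key2).resolve_right hs)
    rcases hn.mem_or_mem hbb' with hb | hb
    · exact Or.inl ⟨b, c, hc, hbc, hb⟩
    · exact Or.inr ⟨b', c', hc', hbc', hb⟩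

lemma mem_extPrime_iff_of_mem {S T' : Subalgebra k K} {n : Ideal S} {hn : n.IsPrime}
    {hloc : T' ≤ locAt S n hn} {z : ↥T'} (hzS : (z : K) ∈ S) :
    z ∈ extPrime S T' n hn hloc ↔ (⟨(z : K), hzS⟩ : ↥S) ∈ n := by
  constructor
  · rintro ⟨e, s, hs, heq, he⟩
    have : (⟨(z : K), hzS⟩ : ↥S) * s = e := Subtype.coe_injective heq
    have : (⟨(z : K), hzS⟩ : ↥S) * s ∈ n := this ▸ he
    exact (hn.mem_or_mem this).resolve_right hs
  · intro hz
    exact ⟨⟨(z : K), hzS⟩, 1, (Ideal.ne_top_iff_one n).mp hn.ne_top, by simp, hz⟩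

end Aux
section Aux2

variable {k K : Type*} [Field k] [Field K] [Algebra k K]

lemma locAt_extPrime {S T' : Subalgebra k K} (hST : S ≤ T') {n : Ideal S} {hn : n.IsPrime}
    {hloc : T' ≤ locAt S n hn} :
    locAt T' (extPrime S T' n hn hloc) extPrime_isPrime = locAt S n hn := by
  apply le_antisymm
  · rintro x ⟨α, σ, hσ, hx⟩
    obtain ⟨b, c, hc, hbc⟩ := hloc α.2
    obtain ⟨b', c', hc', hbc'⟩ := hloc σ.2
    have hb' : b' ∉ n := fun hb' => hσ ⟨b', c', hc', hbc', hb'⟩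
    refine ⟨b * c', b' * c, fun h => (hn.mem_or_mem h).elim hb' hc, ?_⟩
    push_cast
    rw [← hbc', ← hbc, ← hx]
    ring
  · rintro x ⟨e, s, hs, hx⟩
    refine ⟨⟨(e : K), hST e.2⟩, ⟨(s : K), hST s.2⟩, ?_, hx⟩
    intro hsm
    exact hs ((mem_extPrime_iff_of_mem (hloc := hloc) (z := ⟨(s : K), hST s.2⟩) s.2).mp hsm)

lemma comap_extPrime {R S T' : Subalgebra k K} (hRS : R ≤ S) (hRT : R ≤ T') (hST : S ≤ T')
    {n : Ideal S} {hn : n.IsPrime} {hloc : T' ≤ locAt S n hn} :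
    Ideal.comap (Subalgebra.inclusion hRT) (extPrime S T' n hn hloc)
      = Ideal.comap (Subalgebra.inclusion hRS) n := by
  ext r
  simp only [Ideal.mem_comap]
  have h1 : ((Subalgebra.inclusion hRT r : ↥T') : K) ∈ S := hRS r.2
  rw [mem_extPrime_iff_of_mem h1]
  exact Iff.rfl

lemma algebraMap_not_mem {S : Subalgebra k K} {n : Ideal S} (hn : n.IsPrime) {c : k}
    (hc : c ≠ 0) : algebraMap k ↥S c ∉ n := by
  intro h
  have h1 : (1 : ↥S) ∈ n := by
    have : (1 : ↥S) = algebraMap k ↥S c⁻¹ * algebraMap k ↥S c := by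
      rw [← map_mul, inv_mul_cancel₀ hc, map_one]
    rw [this]
    exact n.mul_mem_left _ h
  exact (Ideal.ne_top_iff_one n).mp hn.ne_top h1

lemma extPrime_isMaximal {S T' : Subalgebra k K} (hST : S ≤ T') {n : Ideal S}
    (hmax : n.IsMaximal) {hn : n.IsPrime} {hloc : T' ≤ locAt S n hn} (hfg : S.FG)
    [IsAlgClosed k] :
    (extPrime S T' n hn hloc).IsMaximal := by
  haveI : Algebra.FiniteType k ↥S := (Subalgebra.fg_iff_finiteType S).mp hfg
  set m := extPrime S T' n hn hloc with hm
  have hKinj : Function.Injective (algebraMap k K) := (algebraMap k K).injective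
  -- every element of T' is a scalar mod m
  have key : ∀ z : ↥T', ∃ c : k, z - algebraMap k ↥T' c ∈ m := by
    intro z
    obtain ⟨e, s, hs, hes⟩ := hloc z.2
    obtain ⟨ce, hce⟩ := exists_sub_algebraMap_mem k ↥S n hmax e
    obtain ⟨cs, hcs⟩ := exists_sub_algebraMap_mem k ↥S n hmax s
    have hcs0 : cs ≠ 0 := by
      rintro rfl
      apply hs
      simpa using hcs
    have hcsK : algebraMap k K cs ≠ 0 := fun h0 => hcs0 (hKinj (by rw [h0, map_zero]))
    refine ⟨ce / cs, e * algebraMap k ↥S cs - algebraMap k ↥S ce * s, s * algebraMap k ↥S cs,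
      fun h => (hn.mem_or_mem h).elim hs (algebraMap_not_mem hn hcs0), ?_, ?_⟩
    · push_cast [SubalgebraClass.coe_algebraMap]
      rw [← hes]
      field_simp
    · have : e * algebraMap k ↥S cs - algebraMap k ↥S ce * s
          = (e - algebraMap k ↥S ce) * algebraMap k ↥S cs
            - algebraMap k ↥S ce * (s - algebraMap k ↥S cs) := by ring
      rw [this]
      exact Ideal.sub_mem _ (n.mul_mem_right _ hce) (n.mul_mem_left _ hcs)
  refine Ideal.isMaximal_iff.mpr ⟨(Ideal.ne_top_iff_one m).mp extPrime_isPrime.ne_top, ?_⟩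
  intro J x hmJ hxm hxJ
  obtain ⟨c, hc⟩ := key x
  have hc0 : c ≠ 0 := by
    rintro rfl
    apply hxm
    simpa using hc
  have halgJ : algebraMap k ↥T' c ∈ J := by
    have h2 : algebraMap k ↥T' c = x - (x - algebraMap k ↥T' c) := by ring
    rw [h2]
    exact J.sub_mem hxJ (hmJ hc)
  have h3 : (1 : ↥T') = algebraMap k ↥T' c⁻¹ * algebraMap k ↥T' c := by
    rw [← map_mul, inv_mul_cancel₀ hc0, map_one]
  rw [h3]
  exact J.mul_mem_left _ halgJ

lemma memU_extPrime {R S T' : Subalgebra k K} (hRS : R ≤ S) (hRT : R ≤ T') (hST : S ≤ T')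
    {n : Ideal S} {hn : n.IsPrime} {hloc : T' ≤ locAt S n hn} (hU : memU R S hRS n) (hfg : S.FG)
    [IsAlgClosed k] :
    memU R T' hRT (extPrime S T' n hn hloc) := by
  obtain ⟨hnmax, heq⟩ := hU
  refine ⟨extPrime_isMaximal hST hnmax hfg, ?_⟩
  exact (locAt_congr (comap_extPrime hRS hRT hST)).trans
    (heq.trans (locAt_extPrime hST).symm)

end Aux2
section Aux3

lemma htOf_ne_bot {A : Type*} [CommRing A] [IsDomain A] {t : Ideal A} (h1 : htOf t = 1) :
    t ≠ ⊥ := by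
  rintro rfl
  haveI : Unique {p : PrimeSpectrum A // p.asIdeal ≤ (⊥ : Ideal A)} := by
    refine ⟨⟨⟨⟨⊥, Ideal.bot_prime⟩, le_refl _⟩⟩, ?_⟩
    rintro ⟨p, hp⟩
    exact Subtype.ext (PrimeSpectrum.ext (le_antisymm hp bot_le))
  rw [htOf, Order.krullDim_eq_zero_of_unique] at h1
  exact zero_ne_one h1

lemma eq_of_htOf_eq_one {A : Type*} [CommRing A] [IsDomain A] {t p : Ideal A}
    (ht : t.IsPrime) (h1 : htOf t = 1) (hp : p.IsPrime) (hpt : p ≤ t) (hp0 : p ≠ ⊥) :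
    p = t := by
  by_contra hne
  have hlt : p < t := lt_of_le_of_ne hpt hne
  let X := {q : PrimeSpectrum A // q.asIdeal ≤ t}
  let x0 : X := ⟨⟨⊥, Ideal.bot_prime⟩, bot_le⟩
  let x1 : X := ⟨⟨p, hp⟩, hpt⟩
  let x2 : X := ⟨⟨t, ht⟩, le_refl _⟩
  have h01 : x0 < x1 := by
    apply Subtype.mk_lt_mk.mpr
    show (⊥ : Ideal A) < p
    exact Ne.bot_lt hp0
  have h12 : x1 < x2 := by
    apply Subtype.mk_lt_mk.mpr
    exact hlt
  let chain : LTSeries X := ((RelSeries.singleton _ x0).snoc x1 (by exact h01)).snoc x2 (by exact h12)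
  have hlen : chain.length = 2 := rfl
  have hle := Order.LTSeries.length_le_krullDim chain
  rw [hlen, show Order.krullDim X = htOf t from rfl, h1] at hle
  norm_num at hle
end Aux3

/-- If `R` is noetherian in codimension 1 with witnessing depiction `S` and
`T := ⋂_{n ∈ U_{S/R}} S_n`, then every height 1 prime of `T` lies in `Z_{T/R}`. -/
theorem height_one_prime_of_depT_memZ (k K : Type*) [Field k] [IsAlgClosed k] [Field K] [Algebra k K]
    (R : Subalgebra k K) (hfrac : IsFractionRing ↥R K)
    (S : Subalgebra k K) (hS : IsDepiction R S) (hw : Witnessing R S hS.le) :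
    ∀ t : Ideal (depT R S hS.le), t.IsPrime → htOf t = 1 →
      memZ R (depT R S hS.le) (hS.le.trans (le_depT R S hS.le)) t := by
  intro t ht h1
  classical
  have hRT : R ≤ depT R S hS.le := hS.le.trans (le_depT R S hS.le)
  have hST : S ≤ depT R S hS.le := le_depT R S hS.le
  haveI hnoeth : IsNoetherianRing ↥S := by
    haveI : Algebra.FiniteType k ↥S := (Subalgebra.fg_iff_finiteType S).mp hS.fg
    exact Algebra.FiniteType.isNoetherianRing k ↥S
  -- a nonzero element of t ∩ S
  obtain ⟨n₀, hn₀U⟩ := hS.nonempty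
  obtain ⟨hn₀max, -⟩ := id hn₀U
  have hTn₀ : depT R S hS.le ≤ locAt S n₀ hn₀max.isPrime := depT_le_locAt hS.le hn₀U _
  obtain ⟨z, hzt, hz0⟩ := Submodule.exists_mem_ne_zero_of_ne_bot (htOf_ne_bot h1)
  obtain ⟨a, c, hc, hbc⟩ := hTn₀ z.2
  have hzK : (z : K) ≠ 0 := fun h => hz0 (Subtype.ext h)
  have hcK : (c : K) ≠ 0 := by
    intro h
    exact hc (by rw [show c = 0 from Subtype.ext h]; exact n₀.zero_mem)
  have haK : (a : K) ≠ 0 := by rw [← hbc]; exact mul_ne_zero hzK hcK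
  set aT : ↥(depT R S hS.le) := ⟨(a : K), hST a.2⟩ with haT
  have haTt : aT ∈ t := by
    have h2 : aT = z * ⟨(c : K), hST c.2⟩ := Subtype.ext hbc.symm
    rw [h2]
    exact Ideal.mul_mem_right _ _ hzt
  -- ideal machinery in S
  set Ia : Ideal ↥S := Ideal.span {a} with hIa
  obtain ⟨K₀, hK₀⟩ := Ideal.exists_radical_pow_le_of_fg Ia (IsNoetherian.noetherian _)
  set MP := Ia.minimalPrimes with hMP
  have hMPfin : MP.Finite := by
    rw [hMP, Ideal.minimalPrimes_eq_comap]
    exact (minimalPrimes.finite_of_isNoetherianRing _).image _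
  have hMPprime : ∀ p ∈ MP, p.IsPrime := fun p hp => hp.1.1
  have hMPa : ∀ p ∈ MP, a ∈ p := fun p hp => hp.1.2 (Ideal.mem_span_singleton_self a)
  set G := {p | p ∈ MP ∧ ∃ n : Ideal ↥S, memU R S hS.le n ∧ p ≤ n} with hG
  have hGfin : G.Finite := hMPfin.subset (fun p hp => hp.1)
  have hlocG : ∀ p, p ∈ G → ∀ hpr : p.IsPrime, depT R S hS.le ≤ locAt S p hpr := by
    intro p hp hpr
    obtain ⟨-, n, hnU, hpn⟩ := hp
    obtain ⟨hnmax, -⟩ := id hnU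
    exact (depT_le_locAt hS.le hnU hnmax.isPrime).trans (locAt_anti hpn)
  -- Claim: some extended minimal prime sits inside t
  have claim : ∃ p ∈ G, ∀ z' : ↥(depT R S hS.le),
      (∃ e s : ↥S, s ∉ p ∧ (z' : K) * (s : K) = (e : K) ∧ e ∈ p) → z' ∈ t := by
    by_contra hC
    push_neg at hC
    choose! x hx hxnt using hC
    set Gf := hGfin.toFinset with hGf
    set X : ↥(depT R S hS.le) := ∏ p ∈ Gf, x p with hX
    haveI := ht
    have hXt : X ∉ t := by
      intro hXmem
      obtain ⟨p, hpGf, hpt⟩ := Ideal.IsPrime.prod_mem_iff.mp hXmem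
      exact hxnt p (hGfin.mem_toFinset.mp hpGf) hpt
    -- X lies in every good extended prime
    have hXp : ∀ p ∈ G, ∃ e s : ↥S, s ∉ p ∧ (X : K) * (s : K) = (e : K) ∧ e ∈ p := by
      intro p hp
      have hmem : p ∈ Gf := hGfin.mem_toFinset.mpr hp
      set P : ↥(depT R S hS.le) := ∏ q ∈ Gf.erase p, x q with hP
      have hXsplit : X = x p * P := (Finset.mul_prod_erase _ _ hmem).symm
      obtain ⟨e, s, hs, hxe, he⟩ := hx p hp
      obtain ⟨b2, c2, hc2, hb2⟩ := hlocG p hp (hMPprime p hp.1) P.2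
      refine ⟨e * b2, s * c2, fun h => ((hMPprime p hp.1).mem_or_mem h).elim hs hc2, ?_,
        p.mul_mem_right _ he⟩
      have hXPK : (X : K) = (x p : K) * (P : K) := by rw [hXsplit]; push_cast; ring
      rw [hXPK]
      push_cast
      rw [show ((x p : K) * (P : K)) * ((s : K) * c2)
        = ((x p : K) * s) * ((P : K) * c2) from by ring, hxe, hb2]
    -- the key element X^K₀ / a lies in T
    have hXKa : (X : K) ^ K₀ / (a : K) ∈ depT R S hS.le := by
      apply Algebra.mem_sInf.mpr
      rintro L ⟨n, hnmax, hnU, rfl⟩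
      haveI := hnmax.isPrime
      obtain ⟨e, s, hs, hxe⟩ := depT_le_locAt hS.le hnU hnmax.isPrime X.2
      by_cases han : a ∈ n
      · have hIan : Ia ≤ n := by rw [hIa, Ideal.span_le, Set.singleton_subset_iff]; exact han
        have he_mem : ∀ p ∈ MP, p ≤ n → e ∈ p := by
          intro p hpMP hpn
          have hpG : p ∈ G := ⟨hpMP, n, hnU, hpn⟩
          obtain ⟨e', s', hs', hxe', he'⟩ := hXp p hpG
          have hpr := hMPprime p hpMP
          have hKeq : ((e * s' : ↥S) : K) = ((e' * s : ↥S) : K) := by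
            push_cast
            rw [← hxe, ← hxe']
            ring
          have hmm : e * s' ∈ p := by
            rw [Subtype.coe_injective hKeq]
            exact p.mul_mem_right _ he'
          exact (hpr.mem_or_mem hmm).resolve_right hs'
        have hbad : ∀ p, p ∈ MP → ¬ p ≤ n → ∃ w : ↥S, w ∈ p ∧ w ∉ n := by
          intro p hpMP hnle
          exact SetLike.not_le_iff_exists.mp hnle
        choose! w hw1 hw2 using hbad
        set Bf := hMPfin.toFinset.filter (fun p => ¬ p ≤ n) with hBf
        set W : ↥S := ∏ p ∈ Bf, w p with hW
        have hWn : W ∉ n := by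
          intro hWmem
          obtain ⟨p, hpBf, hpn⟩ := Ideal.IsPrime.prod_mem_iff.mp hWmem
          have h3 := Finset.mem_filter.mp (hBf ▸ hpBf)
          exact hw2 p (hMPfin.mem_toFinset.mp h3.1) h3.2 hpn
        have hWe : ∀ p ∈ MP, W * e ∈ p := by
          intro p hpMP
          by_cases hpn : p ≤ n
          · exact p.mul_mem_left _ (he_mem p hpMP hpn)
          · have hmem : p ∈ Bf := Finset.mem_filter.mpr ⟨hMPfin.mem_toFinset.mpr hpMP, hpn⟩
            have hsplit : W = w p * ∏ q ∈ Bf.erase p, w q := (Finset.mul_prod_erase _ _ hmem).symm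
            rw [hsplit, mul_assoc]
            exact p.mul_mem_right _ (hw1 p hpMP hpn)
        have hWe_rad : W * e ∈ Ia.radical := by
          rw [Ideal.radical_eq_sInf]
          apply Ideal.mem_sInf.mpr
          rintro J ⟨hJ1, hJ2⟩
          haveI := hJ2
          obtain ⟨q, hqMP, hqJ⟩ := Ideal.exists_minimalPrimes_le hJ1
          exact hqJ (hWe q hqMP)
        have hpow : (W * e) ^ K₀ ∈ Ia := hK₀ (Ideal.pow_mem_pow hWe_rad K₀)
        obtain ⟨g, hg⟩ := Ideal.mem_span_singleton'.mp (hIa ▸ hpow)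
        refine ⟨g, s ^ K₀ * W ^ K₀,
          fun h => (‹n.IsPrime›.mem_or_mem h).elim
            (fun h2 => hs (‹n.IsPrime›.mem_of_pow_mem _ h2))
            (fun h2 => hWn (‹n.IsPrime›.mem_of_pow_mem _ h2)), ?_⟩
        have hgK : (g : K) * (a : K) = ((W : K) * e) ^ K₀ := by
          rw [show ((W : K) * (e : K)) ^ K₀ = (((W * e) ^ K₀ : ↥S) : K) from by push_cast; ring]
          rw [← hg]
          push_cast
          ring
        push_cast
        rw [div_mul_eq_mul_div, div_eq_iff haK]
        calc (X : K) ^ K₀ * ((s : K) ^ K₀ * (W : K) ^ K₀)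
            = ((X : K) * s) ^ K₀ * (W : K) ^ K₀ := by ring
          _ = ((W : K) * e) ^ K₀ := by rw [hxe]; ring
          _ = (g : K) * a := hgK.symm
      · refine ⟨e ^ K₀, a * s ^ K₀,
          fun h => (‹n.IsPrime›.mem_or_mem h).elim han
            (fun h2 => hs (‹n.IsPrime›.mem_of_pow_mem _ h2)), ?_⟩
        push_cast
        rw [div_mul_eq_mul_div, show (X : K) ^ K₀ * ((a : K) * (s : K) ^ K₀)
          = ((X : K) * s) ^ K₀ * a from by ring, hxe, mul_div_assoc,
          div_self haK, mul_one]
    -- conclude X ∈ t, contradiction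
    have hXpow : X ^ K₀ ∈ t := by
      have h4 : X ^ K₀ = aT * ⟨(X : K) ^ K₀ / (a : K), hXKa⟩ := by
        apply Subtype.ext
        show ((X ^ K₀ : ↥(depT R S hS.le)) : K) = (a : K) * ((X : K) ^ K₀ / (a : K))
        push_cast
        field_simp
      rw [h4]
      exact Ideal.mul_mem_right _ _ haTt
    exact hXt (ht.mem_of_pow_mem _ hXpow)
  -- use the claim
  obtain ⟨p, hpG, hext⟩ := claim
  have hpr : p.IsPrime := hMPprime p hpG.1
  have hloc : depT R S hS.le ≤ locAt S p hpr := hlocG p hpG hpr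
  have hsub : extPrime S (depT R S hS.le) p hpr hloc ≤ t := fun z' hz' => hext z' hz'
  have haText : aT ∈ extPrime S (depT R S hS.le) p hpr hloc :=
    ⟨a, 1, (Ideal.ne_top_iff_one p).mp hpr.ne_top, by simp [haT], hMPa p hpG.1⟩
  have hne : extPrime S (depT R S hS.le) p hpr hloc ≠ ⊥ := by
    intro hbot
    rw [hbot, Ideal.mem_bot] at haText
    apply haK
    rw [show (a : K) = (aT : K) from rfl, haText]
    rfl
  have heq : extPrime S (depT R S hS.le) p hpr hloc = t :=
    eq_of_htOf_eq_one ht h1 extPrime_isPrime hsub hne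
  obtain ⟨-, n, hnU, hpn⟩ := hpG
  obtain ⟨hnmax, -⟩ := id hnU
  have hlocn : depT R S hS.le ≤ locAt S n hnmax.isPrime := depT_le_locAt hS.le hnU _
  refine ⟨ht, extPrime S (depT R S hS.le) n hnmax.isPrime hlocn,
    memU_extPrime hS.le hRT hST hnU hS.fg, ?_⟩
  intro z' hz't
  obtain ⟨bz, cz, hcz, hbz⟩ := hlocn z'.2
  have hbzt : (⟨(bz : K), hST bz.2⟩ : ↥(depT R S hS.le)) ∈ t := by
    have h5 : (⟨(bz : K), hST bz.2⟩ : ↥(depT R S hS.le)) = z' * ⟨(cz : K), hST cz.2⟩ :=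
      Subtype.ext hbz.symm
    rw [h5]
    exact Ideal.mul_mem_right _ _ hz't
  rw [← heq] at hbzt
  have hbzp : bz ∈ p :=
    (mem_extPrime_iff_of_mem (hloc := hloc) (z := ⟨(bz : K), hST bz.2⟩) bz.2).mp hbzt
  exact ⟨bz, cz, hcz, hbz, hpn hbzp⟩
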